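/- arXiv:2509.11808 — 6 statements merged into one kernel-verified Lean document; each statement's English description precedes it below -/
import Mathlib

section
/- Let n ≥ 1, and let σ² : Fin n → ℝ with σ²ᵢ > 0, μ : Fin n → ℝ with μᵢ > 0, and z : Fin n → ℝ with zᵢ > 0. Define v(z) = (∑ⱼ μⱼ/zⱼ)⁻² · ∑ₖ μₖ²σₖ²/zₖ². Then v(z) ≥ (∑ₖ 1/σₖ²)⁻¹. -/
open Finset

theorem consensus_variance_lower_bound (n : ℕ) (hn : 1 ≤ n)
    (σ2 μ z : Fin n → ℝ)
    (hσ : ∀ i, 0 < σ2 i) (hμ : ∀ i, 0 < μ i) (hz : ∀ i, 0 < z i) :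
    ((∑ j, μ j / z j) ^ 2)⁻¹ * ∑ k, (μ k) ^ 2 * σ2 k / (z k) ^ 2 ≥
      (∑ k, 1 / σ2 k)⁻¹ := by
  have hne : (univ : Finset (Fin n)).Nonempty := by
    simpa using Finset.univ_nonempty_iff.2 (Fin.pos_iff_nonempty.mp hn)
  set S := ∑ j, μ j / z j with hS
  set A := ∑ k, (μ k) ^ 2 * σ2 k / (z k) ^ 2 with hA
  set B := ∑ k, 1 / σ2 k with hB
  have hSpos : 0 < S := Finset.sum_pos (fun i _ => div_pos (hμ i) (hz i)) hne
  have hApos : 0 < A := Finset.sum_pos (fun i _ =>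
    div_pos (mul_pos (pow_pos (hμ i) 2) (hσ i)) (pow_pos (hz i) 2)) hne
  have hBpos : 0 < B := Finset.sum_pos (fun i _ => div_pos one_pos (hσ i)) hne
  have key : S ^ 2 ≤ A * B := by
    have h := sum_mul_sq_le_sq_mul_sq (univ : Finset (Fin n))
      (fun i => μ i * Real.sqrt (σ2 i) / z i) (fun i => 1 / Real.sqrt (σ2 i))
    have e1 : ∀ i : Fin n, μ i * Real.sqrt (σ2 i) / z i * (1 / Real.sqrt (σ2 i))
        = μ i / z i := by
      intro i
      have h0 : Real.sqrt (σ2 i) ≠ 0 := by rw [Real.sqrt_ne_zero (hσ i).le]; exact (hσ i).ne'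
      field_simp
    have e2 : ∀ i : Fin n, (μ i * Real.sqrt (σ2 i) / z i) ^ 2
        = (μ i) ^ 2 * σ2 i / (z i) ^ 2 := by
      intro i
      rw [div_pow, mul_pow, Real.sq_sqrt (hσ i).le]
    have e3 : ∀ i : Fin n, (1 / Real.sqrt (σ2 i)) ^ 2 = 1 / σ2 i := by
      intro i
      rw [div_pow, one_pow, Real.sq_sqrt (hσ i).le]
    simp only [e1, e2, e3] at h
    simpa [hS, hA, hB] using h
  have h1 : B⁻¹ ≤ A / S ^ 2 := by
    rw [inv_le_iff_one_le_mul₀ hBpos, div_mul_eq_mul_div, le_div_iff₀ (by positivity),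
      one_mul]
    linarith [key]
  calc (S ^ 2)⁻¹ * A = A / S ^ 2 := by ring
    _ ≥ B⁻¹ := h1
end

section
/- Let n ≥ 1, σ² : Fin n → ℝ positive, μ : Fin n → ℝ positive, z : Fin n → ℝ positive. Define v(z) = (∑ⱼ μⱼ/zⱼ)⁻² · ∑ₖ μₖ²σₖ²/zₖ². Then v(z) = (∑ₖ 1/σₖ²)⁻¹ if and only if there exists α > 0 such that zᵢ = α·μᵢ·σᵢ² for all i. -/
open Finset

lemma lagrange_id (n : ℕ) (w t : Fin n → ℝ) :
    ∑ i, ∑ j, w i * w j * (t i - t j) ^ 2 =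
      2 * ((∑ i, w i) * (∑ i, w i * t i ^ 2) - (∑ i, w i * t i) ^ 2) := by
  have h : ∀ i j : Fin n, w i * w j * (t i - t j) ^ 2 =
      (w i * t i ^ 2) * w j - 2 * ((w i * t i) * (w j * t j)) + w i * (w j * t j ^ 2) := by
    intro i j; ring
  simp only [h, Finset.sum_add_distrib, Finset.sum_sub_distrib, ← Finset.mul_sum,
    ← Finset.sum_mul]
  ring

theorem consensus_variance_eq_iff_optimal (n : ℕ) (hn : 1 ≤ n)
    (σ2 μ z : Fin n → ℝ)
    (hσ : ∀ i, 0 < σ2 i) (hμ : ∀ i, 0 < μ i) (hz : ∀ i, 0 < z i) :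
    ((∑ j, μ j / z j) ^ 2)⁻¹ * ∑ k, (μ k) ^ 2 * σ2 k / (z k) ^ 2 =
      (∑ k, 1 / σ2 k)⁻¹ ↔
    ∃ α : ℝ, 0 < α ∧ ∀ i, z i = α * μ i * σ2 i := by
  set w : Fin n → ℝ := fun i => 1 / σ2 i with hw
  set t : Fin n → ℝ := fun i => μ i * σ2 i / z i with ht
  have hwpos : ∀ i, 0 < w i := fun i => div_pos one_pos (hσ i)
  have htpos : ∀ i, 0 < t i := fun i => by
    have := hσ i; have := hμ i; have := hz i; positivity
  have i0 : Fin n := ⟨0, hn⟩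
  have hS : 0 < ∑ i, w i := Finset.sum_pos (fun i _ => hwpos i) ⟨i0, Finset.mem_univ i0⟩
  have hT : 0 < ∑ i, w i * t i :=
    Finset.sum_pos (fun i _ => mul_pos (hwpos i) (htpos i)) ⟨i0, Finset.mem_univ i0⟩
  have e1 : ∑ j, μ j / z j = ∑ j, w j * t j := by
    apply Finset.sum_congr rfl; intro j _
    have := (hσ j).ne'; field_simp [hw, ht]; have := (hz j).ne'; simp only [w, t]; field_simp
  have e2 : ∑ k, (μ k) ^ 2 * σ2 k / (z k) ^ 2 = ∑ k, w k * t k ^ 2 := by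
    apply Finset.sum_congr rfl; intro k _
    have := (hσ k).ne'; have := (hz k).ne'; field_simp [hw, ht]; simp only [w, t]; field_simp
  rw [e1, e2]
  constructor
  · intro h
    -- turn into (∑ w t)^2 = (∑ w)(∑ w t²)
    have key : (∑ i, w i) * (∑ i, w i * t i ^ 2) = (∑ i, w i * t i) ^ 2 := by
      field_simp at h
      nlinarith [h, sq_nonneg (∑ i, w i * t i)]
    have hzero : ∑ i, ∑ j, w i * w j * (t i - t j) ^ 2 = 0 := by
      rw [lagrange_id]; rw [key]; ring
    have hconst : ∀ i, t i = t i0 := by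
      intro i
      have hnn : ∀ a ∈ (Finset.univ : Finset (Fin n)),
          0 ≤ ∑ j, w a * w j * (t a - t j) ^ 2 := by
        intro a _
        exact Finset.sum_nonneg fun j _ => mul_nonneg (mul_nonneg (hwpos a).le (hwpos j).le) (sq_nonneg _)
      have h1 := (Finset.sum_eq_zero_iff_of_nonneg hnn).mp hzero i (Finset.mem_univ i)
      have hnn2 : ∀ j ∈ (Finset.univ : Finset (Fin n)),
          0 ≤ w i * w j * (t i - t j) ^ 2 := fun j _ => mul_nonneg (mul_nonneg (hwpos i).le (hwpos j).le) (sq_nonneg _)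
      have h2 := (Finset.sum_eq_zero_iff_of_nonneg hnn2).mp h1 i0 (Finset.mem_univ i0)
      have hwne : w i * w i0 ≠ 0 := (mul_pos (hwpos i) (hwpos i0)).ne'
      have : (t i - t i0) ^ 2 = 0 := by
        rcases mul_eq_zero.mp h2 with h | h
        · exact absurd h hwne
        · exact h
      have := pow_eq_zero_iff (n := 2) (by norm_num) |>.mp this
      linarith
    refine ⟨1 / t i0, div_pos one_pos (htpos i0), fun i => ?_⟩
    have hti : t i = t i0 := hconst i
    have : μ i * σ2 i / z i = t i0 := by rw [← hti]
    have hzne := (hz i).ne'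
    have htne := (htpos i0).ne'
    field_simp at this ⊢
    linarith [this]
  · rintro ⟨α, hα, hzα⟩
    have htα : ∀ i, t i = 1 / α := by
      intro i
      have := (hσ i).ne'; have := (hμ i).ne'
      rw [ht]; simp only; rw [hzα i]; field_simp
    simp only [htα]
    rw [← Finset.sum_mul, ← Finset.sum_mul]
    have : (0:ℝ) < 1/α := by positivity
    field_simp
end

section
/- Let W be an n×n nonnegative matrix whose associated directed graph is strongly connected (W irreducible), and let L = diag(W·1) − W be its Laplacian. Then there exists a unique vector μ ∈ ℝⁿ with Lᵀμ = 0, ∑ᵢ μᵢ = 1, and μᵢ > 0 for all i. -/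
open Finset Matrix

/-- The directed graph of positive entries of `W` is strongly connected. -/
def StronglyConnectedMat {n : ℕ} (W : Matrix (Fin n) (Fin n) ℝ) : Prop :=
  ∀ i j : Fin n, i ≠ j → Relation.TransGen (fun a b => 0 < W a b) i j

namespace PerronAux

variable {n : ℕ}

/-- Column equation from `Lᵀ μ = 0`. -/
lemma col_eq (W : Matrix (Fin n) (Fin n) ℝ) (μ : Fin n → ℝ)
    (h : (Matrix.diagonal (W.mulVec 1) - W)ᵀ.mulVec μ = 0) (j : Fin n) :
    (∑ k, W j k) * μ j = ∑ i, W i j * μ i := by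
  have hj := congrFun h j
  simp only [Matrix.mulVec, dotProduct, Matrix.transpose_apply,
    Matrix.sub_apply, Matrix.diagonal_apply, Pi.zero_apply, sub_mul, ite_mul,
    zero_mul, Finset.sum_sub_distrib, Finset.sum_ite_eq', Finset.mem_univ,
    if_true] at hj
  have h1 : W.mulVec 1 j = ∑ k, W j k := by
    simp [Matrix.mulVec, dotProduct]
  simp only [Pi.one_apply, mul_one] at hj
  linarith

/-- Equality in the triangle inequality, for every column. -/
lemma abs_col_eq (W : Matrix (Fin n) (Fin n) ℝ) (hW : ∀ i j, 0 ≤ W i j)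
    (μ : Fin n → ℝ)
    (hcol : ∀ j, (∑ k, W j k) * μ j = ∑ i, W i j * μ i) (j : Fin n) :
    |∑ i, W i j * μ i| = ∑ i, W i j * |μ i| := by
  have hterm : ∀ j, |∑ i, W i j * μ i| ≤ ∑ i, W i j * |μ i| := by
    intro j
    calc |∑ i, W i j * μ i| ≤ ∑ i, |W i j * μ i| := Finset.abs_sum_le_sum_abs _ _
    _ = ∑ i, W i j * |μ i| := by
        refine Finset.sum_congr rfl fun i _ => ?_
        rw [abs_mul, abs_of_nonneg (hW i j)]
  have hsum : ∑ j, (∑ i, W i j * |μ i| - |∑ i, W i j * μ i|) = 0 := by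
    have hswap : ∑ j, ∑ i, W i j * |μ i| = ∑ i, (∑ k, W i k) * |μ i| := by
      rw [Finset.sum_comm]
      refine Finset.sum_congr rfl fun i _ => ?_
      rw [Finset.sum_mul]
    have habsj : ∀ j, |∑ i, W i j * μ i| = (∑ k, W j k) * |μ j| := by
      intro j
      rw [← hcol j, abs_mul, abs_of_nonneg (Finset.sum_nonneg fun k _ => hW j k)]
    rw [Finset.sum_sub_distrib, hswap]
    rw [Finset.sum_congr rfl fun j _ => habsj j]
    ring
  have := (Finset.sum_eq_zero_iff_of_nonneg
    (fun j _ => sub_nonneg.mpr (hterm j))).mp hsum j (Finset.mem_univ j)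
  linarith [this]

/-- Sign propagation along an edge. -/
lemma prop_step (W : Matrix (Fin n) (Fin n) ℝ) (hW : ∀ i j, 0 ≤ W i j)
    (μ : Fin n → ℝ)
    (hcol : ∀ j, (∑ k, W j k) * μ j = ∑ i, W i j * μ i)
    {a b : Fin n} (hab : 0 < W a b) (ha : 0 < μ a) : 0 < μ b := by
  by_contra hb
  push_neg at hb
  have habs := abs_col_eq W hW μ hcol b
  have hd : 0 ≤ ∑ k, W b k := Finset.sum_nonneg fun k _ => hW b k
  have hS : ∑ i, W i b * μ i ≤ 0 := by
    rw [← hcol b]; exact mul_nonpos_of_nonneg_of_nonpos hd hb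
  rw [abs_of_nonpos hS] at habs
  have hzero : ∑ i, W i b * (|μ i| + μ i) = 0 := by
    have : ∑ i, W i b * (|μ i| + μ i) = (∑ i, W i b * |μ i|) + ∑ i, W i b * μ i := by
      rw [← Finset.sum_add_distrib]
      exact Finset.sum_congr rfl fun i _ => by ring
    rw [this, ← habs]; ring
  have hnn : ∀ i ∈ Finset.univ, 0 ≤ W i b * (|μ i| + μ i) := by
    intro i _
    exact mul_nonneg (hW i b) (by linarith [neg_abs_le (μ i)])
  have hfa : W a b * (|μ a| + μ a) ≤ 0 := hzero ▸ Finset.single_le_sum hnn (Finset.mem_univ a)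
  have : 0 < W a b * (|μ a| + μ a) := by
    apply mul_pos hab
    rw [abs_of_pos ha]; linarith
  linarith

/-- If a kernel vector has one positive entry, all entries are positive. -/
lemma all_pos (W : Matrix (Fin n) (Fin n) ℝ) (hW : ∀ i j, 0 ≤ W i j)
    (hirr : StronglyConnectedMat W) (μ : Fin n → ℝ)
    (hcol : ∀ j, (∑ k, W j k) * μ j = ∑ i, W i j * μ i)
    {i0 : Fin n} (hi0 : 0 < μ i0) : ∀ j, 0 < μ j := by
  intro j
  rcases eq_or_ne i0 j with rfl | hne
  · exact hi0
  · have htg := hirr i0 j hne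
    clear hne
    induction htg with
    | single h => exact prop_step W hW μ hcol h hi0
    | tail h1 h2 ih => exact prop_step W hW μ hcol h2 ih

end PerronAux

theorem laplacian_left_perron (n : ℕ) (hn : 1 ≤ n)
    (W : Matrix (Fin n) (Fin n) ℝ)
    (hW : ∀ i j, 0 ≤ W i j) (hirr : StronglyConnectedMat W) :
    ∃! μ : Fin n → ℝ,
      (Matrix.diagonal (W.mulVec 1) - W)ᵀ.mulVec μ = 0 ∧
      (∑ i, μ i = 1) ∧ (∀ i, 0 < μ i) := by
  have hnemp : Nonempty (Fin n) := ⟨⟨0, hn⟩⟩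
  have hL1 : (Matrix.diagonal (W.mulVec 1) - W).mulVec 1 = 0 := by
    funext i
    simp [Matrix.mulVec, dotProduct, Matrix.sub_apply, Matrix.diagonal_apply,
      sub_mul, Finset.sum_sub_distrib, Finset.sum_ite_eq', mul_one]
  have h1ne : (1 : Fin n → ℝ) ≠ 0 := by
    intro h
    simpa using congrFun h ⟨0, hn⟩
  have hdet : (Matrix.diagonal (W.mulVec 1) - W).det = 0 :=
    Matrix.exists_mulVec_eq_zero_iff.mp ⟨1, h1ne, hL1⟩
  have hdetT : (Matrix.diagonal (W.mulVec 1) - W)ᵀ.det = 0 := by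
    rw [Matrix.det_transpose]; exact hdet
  obtain ⟨μ0, hμ0ne, hμ0⟩ := Matrix.exists_mulVec_eq_zero_iff.mpr hdetT
  -- key sign lemma
  have key : ∀ ν : Fin n → ℝ, (Matrix.diagonal (W.mulVec 1) - W)ᵀ.mulVec ν = 0 →
      ν ≠ 0 → (∀ i, 0 < ν i) ∨ (∀ i, ν i < 0) := by
    intro ν hker hne0
    have hcol := fun j => PerronAux.col_eq W ν hker j
    by_cases hpos : ∃ i, 0 < ν i
    · obtain ⟨i0, hi0⟩ := hpos
      exact Or.inl (PerronAux.all_pos W hW hirr ν hcol hi0)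
    · push_neg at hpos
      have hne' : ∃ i, ν i ≠ 0 := by
        by_contra hall; push_neg at hall
        exact hne0 (funext fun i => hall i)
      obtain ⟨i0, hi⟩ := hne'
      have hi0 : 0 < (-ν) i0 := by
        have := lt_of_le_of_ne (hpos i0) hi
        simpa using this
      have hkerneg : (Matrix.diagonal (W.mulVec 1) - W)ᵀ.mulVec (-ν) = 0 := by
        rw [Matrix.mulVec_neg, hker, neg_zero]
      have hcol' := fun j => PerronAux.col_eq W (-ν) hkerneg j
      have hall := PerronAux.all_pos W hW hirr (-ν) hcol' hi0
      exact Or.inr fun i => by have := hall i; simpa using this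
  -- produce a positive kernel vector
  obtain ⟨ν, hkerν, hposν⟩ :
      ∃ ν : Fin n → ℝ, (Matrix.diagonal (W.mulVec 1) - W)ᵀ.mulVec ν = 0 ∧ ∀ i, 0 < ν i := by
    rcases key μ0 hμ0 hμ0ne with hp | hm
    · exact ⟨μ0, hμ0, hp⟩
    · refine ⟨-μ0, ?_, fun i => by have := hm i; simpa using this⟩
      rw [Matrix.mulVec_neg, hμ0, neg_zero]
  set s : ℝ := ∑ i, ν i with hs_def
  have hs : 0 < s := Finset.sum_pos (fun i _ => hposν i) Finset.univ_nonempty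
  refine ⟨s⁻¹ • ν, ⟨?_, ?_, ?_⟩, ?_⟩
  · rw [Matrix.mulVec_smul, hkerν, smul_zero]
  · simp only [Pi.smul_apply, smul_eq_mul, ← Finset.mul_sum]
    exact inv_mul_cancel₀ hs.ne'
  · intro i
    exact mul_pos (inv_pos.mpr hs) (hposν i)
  · rintro y ⟨hky, hsy, hpy⟩
    have hkw : (Matrix.diagonal (W.mulVec 1) - W)ᵀ.mulVec (y - s⁻¹ • ν) = 0 := by
      rw [Matrix.mulVec_sub, hky, Matrix.mulVec_smul, hkerν, smul_zero, sub_zero]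
    have hsw : ∑ i, (y - s⁻¹ • ν) i = 0 := by
      simp only [Pi.sub_apply, Pi.smul_apply, smul_eq_mul, Finset.sum_sub_distrib,
        ← Finset.mul_sum, hsy]
      rw [inv_mul_cancel₀ hs.ne']
      ring
    by_contra hne
    have hwne : y - s⁻¹ • ν ≠ 0 := fun h => hne (sub_eq_zero.mp h)
    rcases key _ hkw hwne with hp | hm
    · have : 0 < ∑ i, (y - s⁻¹ • ν) i := Finset.sum_pos (fun i _ => hp i) Finset.univ_nonempty
      linarith
    · have : ∑ i, (y - s⁻¹ • ν) i < 0 := Finset.sum_neg (fun i _ => hm i) Finset.univ_nonempty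
      linarith
end

section
/- Let W be an n×n nonnegative matrix with irreducible associated graph, L[W] = diag(W1) − W its Laplacian, and μ > 0 the normalized left null vector of L[W]. For any z : Fin n → ℝ with zᵢ > 0, the vector w defined by wᵢ = (μᵢ/zᵢ)/(∑ⱼ μⱼ/zⱼ) satisfies wᵀ·L[diag(z)·W] = 0 and ∑ᵢ wᵢ = 1. -/
open Finset Matrix

private lemma aux_div (a b c d : ℝ) (hb : b ≠ 0) : a / b / c * (b * d) = a * d / c := by
  rcases eq_or_ne c 0 with hc | hc
  · simp [hc]
  · field_simp

theorem rescaled_laplacian_left_null_vector (n : ℕ) (hn : 1 ≤ n)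
    (W : Matrix (Fin n) (Fin n) ℝ)
    (hW : ∀ i j, 0 ≤ W i j) (hirr : StronglyConnectedMat W)
    (μ : Fin n → ℝ) (hμpos : ∀ i, 0 < μ i) (hμsum : ∑ i, μ i = 1)
    (hμnull : μ ᵥ* (Matrix.diagonal (W.mulVec 1) - W) = 0)
    (z : Fin n → ℝ) (hz : ∀ i, 0 < z i) :
    (fun i => (μ i / z i) / (∑ j, μ j / z j)) ᵥ*
        (Matrix.diagonal ((Matrix.diagonal z * W).mulVec 1) - Matrix.diagonal z * W) = 0 ∧
    ∑ i, (μ i / z i) / (∑ j, μ j / z j) = 1 := by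
  have hS : 0 < ∑ j, μ j / z j := by
    apply Finset.sum_pos
    · intro j _
      exact div_pos (hμpos j) (hz j)
    · exact Finset.univ_nonempty_iff.mpr ⟨⟨0, hn⟩⟩
  have hSne : (∑ j, μ j / z j) ≠ 0 := ne_of_gt hS
  constructor
  · funext k
    have h0 := congrFun hμnull k
    simp only [vecMul, dotProduct, Matrix.sub_apply, Matrix.diagonal_apply, mulVec,
      dotProduct, Pi.one_apply, mul_one, Pi.zero_apply, mul_sub, Finset.sum_sub_distrib,
      Matrix.mul_apply, sub_eq_zero] at h0 ⊢
    have key : ∀ i j : Fin n, (∑ x, (if i = x then z i else 0) * W x j) = z i * W i j := by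
      intro i j
      rw [Finset.sum_eq_single i]
      · simp
      · intro b _ hb; simp [Ne.symm hb]
      · simp
    have h0' : μ k * ∑ j, W k j = ∑ j, μ j * W j k := by
      rw [Finset.sum_eq_single k] at h0
      · simpa using h0
      · intro b _ hb; rw [if_neg hb, mul_zero]
      · simp
    calc ∑ i, μ i / z i / (∑ j, μ j / z j) *
          (if i = k then ∑ j, (∑ x, (if i = x then z i else 0) * W x j) else 0)
        = ∑ i, (if i = k then μ i / z i / (∑ j, μ j / z j) * (z i * ∑ j, W i j) else 0) := by
          apply Finset.sum_congr rfl
          intro i _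
          by_cases h : i = k
          · simp only [h, if_true]
            congr 1
            rw [Finset.mul_sum]
            exact Finset.sum_congr rfl fun j _ => key k j
          · simp [h]
      _ = μ k * (∑ j, W k j) / (∑ j, μ j / z j) := by
          rw [Finset.sum_eq_single k]
          · rw [if_pos rfl, aux_div _ _ _ _ (hz k).ne']
          · intro b _ hb; rw [if_neg hb]
          · simp
      _ = (∑ j, μ j * W j k) / (∑ j, μ j / z j) := by rw [h0']
      _ = ∑ i, μ i / z i / (∑ j, μ j / z j) * (∑ x, (if i = x then z i else 0) * W x k) := by
          rw [Finset.sum_div]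
          apply Finset.sum_congr rfl
          intro i _
          rw [key i k, aux_div _ _ _ _ (hz i).ne']
  · rw [← Finset.sum_div, div_self hSne]
end

section
/- Let y : Fin n → ℝ be positive, and let M(y) be a matrix with nonnegative entries such that M(y)'s associated graph is strongly connected. Then ∑ⱼ mᵢⱼ(y)(yⱼ − yᵢ) = 0 for all i if and only if y is a constant vector. -/
open Finset Matrix

theorem equilibrium_iff_consensus (n : ℕ)
    (m : Matrix (Fin n) (Fin n) ℝ)
    (hm : ∀ i j, 0 ≤ m i j) (hirr : StronglyConnectedMat m)
    (y : Fin n → ℝ) (hy : ∀ i, 0 < y i) :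
    (∀ i, ∑ j, m i j * (y j - y i) = 0) ↔ ∃ c : ℝ, ∀ i, y i = c := by
  constructor
  · intro heq
    rcases Nat.eq_zero_or_pos n with hn | hn
    · subst hn; exact ⟨0, fun i => i.elim0⟩
    -- pick index achieving the maximum
    obtain ⟨i0, _, hmax⟩ := Finset.exists_max_image Finset.univ y ⟨⟨0, hn⟩, Finset.mem_univ _⟩
    -- key step: if y a is maximal and m a b > 0 then y b = y a (maximal)
    have key : ∀ a b : Fin n, y a = y i0 → 0 < m a b → y b = y i0 := by
      intro a b ha hab
      have hnonpos : ∀ j ∈ Finset.univ, m a j * (y j - y a) ≤ 0 := by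
        intro j _
        have h1 : y j - y a ≤ 0 := by
          have := hmax j (Finset.mem_univ j); rw [ha]; linarith
        exact mul_nonpos_of_nonneg_of_nonpos (hm a j) h1
      have hzero := (Finset.sum_eq_zero_iff_of_nonpos hnonpos).mp (heq a) b (Finset.mem_univ b)
      have : y b - y a = 0 := by
        rcases mul_eq_zero.mp hzero with h | h
        · exact absurd h (ne_of_gt hab)
        · exact h
      linarith [ha, this]
    have hall : ∀ j, Relation.TransGen (fun a b => 0 < m a b) i0 j → y j = y i0 := by
      intro j h
      induction h with
      | single h => exact key _ _ rfl h
      | tail _ h ih => exact key _ _ ih h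
    refine ⟨y i0, fun i => ?_⟩
    by_cases hii : i = i0
    · rw [hii]
    · exact hall i (hirr i0 i (Ne.symm hii))
  · intro ⟨c, hc⟩ i
    apply Finset.sum_eq_zero
    intro j _
    rw [hc j, hc i]; ring
end

section
/- Let f : ℝⁿ → ℝⁿ be locally Lipschitz on (0,∞)ⁿ of the form fᵢ(y) = ∑ⱼ mᵢⱼ(y)(yⱼ − yᵢ) with mᵢⱼ(y) ≥ 0, and suppose a solution y(t), t ≥ 0, is bounded, remains in a compact subset of (0,∞)ⁿ, satisfies |yᵢ(t) − yⱼ(t)| → 0 as t → ∞ for all i, j, and every constant positive vector is a Lyapunov stable equilibrium. Then y(t) converges to a single point c·1 with c > 0. -/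
open Finset Filter

theorem convergence_to_consensus_point (n : ℕ) (hn : 0 < n)
    (m : (Fin n → ℝ) → Fin n → Fin n → ℝ)
    (hm_nonneg : ∀ v : Fin n → ℝ, (∀ i, 0 < v i) → ∀ i j, 0 ≤ m v i j)
    (hm_lip : ∀ v : Fin n → ℝ, (∀ i, 0 < v i) →
      ∃ ε > (0 : ℝ), ∃ L : NNReal, ∀ i j,
        LipschitzOnWith L (fun w => m w i j) (Metric.ball v ε))
    (y : ℝ → Fin n → ℝ)
    (hderiv : ∀ t : ℝ, 0 ≤ t → ∀ i,
      HasDerivAt (fun s => y s i) (∑ j, m (y t) i j * (y t j - y t i)) t)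
    (K : Set (Fin n → ℝ)) (hK : IsCompact K)
    (hKpos : K ⊆ {v : Fin n → ℝ | ∀ i, 0 < v i})
    (hyK : ∀ t : ℝ, 0 ≤ t → y t ∈ K)
    (hagree : ∀ i j, Tendsto (fun t => y t i - y t j) atTop (nhds 0))
    (hstable : ∀ c : ℝ, 0 < c → ∀ ε > (0 : ℝ), ∃ δ > (0 : ℝ),
      ∀ t₀ : ℝ, 0 ≤ t₀ → dist (y t₀) (fun _ => c) < δ →
        ∀ t, t₀ ≤ t → dist (y t) (fun _ => c) < ε) :
    ∃ c : ℝ, 0 < c ∧ Tendsto y atTop (nhds fun _ => c) := by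
  -- Take the sequence y(k), k ∈ ℕ, and extract a convergent subsequence in K.
  obtain ⟨v, hvK, φ, hφ, hconv⟩ :=
    hK.tendsto_subseq (x := fun k : ℕ => y (k : ℝ))
      (fun k => hyK _ (Nat.cast_nonneg k))
  have hφtop : Tendsto (fun k : ℕ => ((φ k : ℕ) : ℝ)) atTop atTop :=
    tendsto_natCast_atTop_atTop.comp hφ.tendsto_atTop
  -- Each coordinate of the subsequence converges.
  have hconvi : ∀ i, Tendsto (fun k : ℕ => y (φ k : ℝ) i) atTop (nhds (v i)) := by
    intro i
    exact ((continuous_apply i).continuousAt.tendsto.comp hconv)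
  -- All coordinates of v are equal.
  have heq : ∀ i j : Fin n, v i = v j := by
    intro i j
    have h1 : Tendsto (fun k : ℕ => y (φ k : ℝ) i - y (φ k : ℝ) j) atTop
        (nhds (v i - v j)) := (hconvi i).sub (hconvi j)
    have h2 : Tendsto (fun k : ℕ => y (φ k : ℝ) i - y (φ k : ℝ) j) atTop (nhds 0) :=
      (hagree i j).comp hφtop
    have := tendsto_nhds_unique h1 h2
    linarith
  set c := v ⟨0, hn⟩ with hc
  have hcpos : 0 < c := hKpos hvK ⟨0, hn⟩
  have hvc : v = fun _ => c := funext fun i => heq i ⟨0, hn⟩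
  refine ⟨c, hcpos, ?_⟩
  rw [Metric.tendsto_atTop]
  intro ε hε
  obtain ⟨δ, hδ, hδ'⟩ := hstable c hcpos ε hε
  rw [hvc] at hconv
  rw [Metric.tendsto_atTop] at hconv
  obtain ⟨N, hN⟩ := hconv δ hδ
  refine ⟨((φ N : ℕ) : ℝ), fun t ht => ?_⟩
  exact hδ' ((φ N : ℕ) : ℝ) (Nat.cast_nonneg _) (hN N le_rfl) t ht
end
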